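/- Let m, k, R, S be natural numbers such that R^3 ≤ m < (R+1)^3 and S^3 ≤ m / 1000^k < (S+1)^3. Then S = R / 10^k. -/

import Mathlib

theorem aryabhata_cbrt_triple_invariant_iter (m k R S : ℕ)
    (hR₁ : R ^ 3 ≤ m) (hR₂ : m < (R + 1) ^ 3)
    (hS₁ : S ^ 3 ≤ m / 1000 ^ k) (hS₂ : m / 1000 ^ k < (S + 1) ^ 3) :
    S = R / 10 ^ k := by
  set d := 10 ^ k with hd
  have hdpos : 0 < d := Nat.pow_pos (by norm_num : 0 < 10)
  have h1000 : (1000 : ℕ) ^ k = d ^ 3 := by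
    rw [hd, ← Nat.pow_mul, Nat.mul_comm, Nat.pow_mul]
  rw [h1000] at hS₁ hS₂
  have hd3pos : 0 < d ^ 3 := Nat.pow_pos hdpos
  have hlow : (R / d) ^ 3 ≤ m / d ^ 3 := by
    rw [Nat.le_div_iff_mul_le hd3pos]
    calc (R / d) ^ 3 * d ^ 3 = (R / d * d) ^ 3 := by ring
      _ ≤ R ^ 3 := Nat.pow_le_pow_left (Nat.div_mul_le_self R d) 3
      _ ≤ m := hR₁
  have hhigh : m / d ^ 3 < (R / d + 1) ^ 3 := by
    rw [Nat.div_lt_iff_lt_mul hd3pos]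
    calc m < (R + 1) ^ 3 := hR₂
      _ ≤ ((R / d + 1) * d) ^ 3 := by
          apply Nat.pow_le_pow_left
          have := Nat.lt_div_mul_add hdpos (a := R)
          nlinarith
      _ = (R / d + 1) ^ 3 * d ^ 3 := by ring
  rcases Nat.lt_trichotomy S (R / d) with h | h | h
  · exfalso
    have : (S + 1) ^ 3 ≤ (R / d) ^ 3 := Nat.pow_le_pow_left h 3
    omega
  · exact h
  · exfalso
    have : (R / d + 1) ^ 3 ≤ S ^ 3 := Nat.pow_le_pow_left h 3
    omega
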